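/- For S = F[[x,y]]/(x²y) and k ≥ 1, the S-module Y_k with generators m, n and relations mx = ny^k, nxy = 0 is isomorphic to the ideal (y^k, x) of S via m ↦ y^k, n ↦ x; in particular Y_1 is isomorphic to the maximal ideal (x,y). -/

import Mathlib

noncomputable section

/-- The D-infinity plane singularity `S = F[[x,y]]/(x²y)`. -/
abbrev Dinf (F : Type*) [Field F] : Type _ :=
  MvPowerSeries (Fin 2) F ⧸
    (Ideal.span {(MvPowerSeries.X (0 : Fin 2)) ^ 2 * MvPowerSeries.X 1} :
      Ideal (MvPowerSeries (Fin 2) F))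

variable (F : Type*) [Field F]

/-- The image of the variable `x` in `S`. -/
abbrev xS : Dinf F := Ideal.Quotient.mk _ (MvPowerSeries.X 0)

/-- The image of the variable `y` in `S`. -/
abbrev yS : Dinf F := Ideal.Quotient.mk _ (MvPowerSeries.X 1)

/-- The module `Y_k`, generated by `m, n` subject to `m x = n y^k` and `n x y = 0`;
realized as the quotient of the free module `S × S` (with `m = (1,0)`, `n = (0,1)`)
by the submodule generated by the relations. -/
abbrev Ymod (k : ℕ) : Type _ :=
  (Dinf F × Dinf F) ⧸
    (Submodule.span (Dinf F) {(xS F, -(yS F ^ k)), ((0 : Dinf F), xS F * yS F)})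


open MvPowerSeries Finsupp

lemma key_div (k : ℕ) (A B : MvPowerSeries (Fin 2) F)
    (h : A * X 1 ^ k + B * X 0 ∈
      (Ideal.span {(X (0 : Fin 2)) ^ 2 * X 1} : Ideal (MvPowerSeries (Fin 2) F))) :
    ∃ A' D : MvPowerSeries (Fin 2) F,
      A = X 0 * A' ∧ B = X 0 * X 1 * D - A' * X 1 ^ k := by
  rw [Ideal.mem_span_singleton] at h
  obtain ⟨D, hD⟩ := h
  have hXA : (X 0 : MvPowerSeries (Fin 2) F) ∣ A := by
    rw [X_dvd_iff]
    intro m hm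
    have h1 : A * X 1 ^ k = X 0 * (X 0 * X 1 * D - B) := by
      ring_nf; ring_nf at hD; linear_combination hD
    have h2 : (X (0 : Fin 2) : MvPowerSeries (Fin 2) F) ∣ A * X 1 ^ k := ⟨_, h1⟩
    rw [X_dvd_iff] at h2
    have := h2 (m + single 1 k) (by simp [hm])
    rwa [X_pow_eq, coeff_add_mul_monomial, mul_one] at this
  obtain ⟨A', hA'⟩ := hXA
  refine ⟨A', D, hA', ?_⟩
  have hx0 : (X (0 : Fin 2) : MvPowerSeries (Fin 2) F) ≠ 0 := by
    intro h
    have := congrArg (MvPowerSeries.coeff (single (0 : Fin 2) 1)) h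
    simp [MvPowerSeries.coeff_X] at this
  have h3 : X 0 * (A' * X 1 ^ k + B) = X 0 * (X 0 * X 1 * D) := by
    rw [hA'] at hD; ring_nf; ring_nf at hD; linear_combination hD
  have := mul_left_cancel₀ hx0 h3
  linear_combination this

/-- the linear map `(a,b) ↦ a y^k + b x` -/
def phi (k : ℕ) : Dinf F × Dinf F →ₗ[Dinf F] Dinf F :=
  yS F ^ k • LinearMap.fst _ _ _ + xS F • LinearMap.snd _ _ _

lemma phi_apply (k : ℕ) (a b : Dinf F) :
    phi F k (a, b) = yS F ^ k * a + xS F * b := rfl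

lemma xxy_zero : xS F * (xS F * yS F) = 0 := by
  have : xS F * (xS F * yS F) =
      Ideal.Quotient.mk _ ((MvPowerSeries.X (0 : Fin 2)) ^ 2 * MvPowerSeries.X 1) := by
    simp only [map_mul, map_pow]; ring
  rw [this, Ideal.Quotient.eq_zero_iff_mem]
  exact Ideal.subset_span rfl

lemma ker_phi (k : ℕ) :
    LinearMap.ker (phi F k) =
      Submodule.span (Dinf F) {(xS F, -(yS F ^ k)), ((0 : Dinf F), xS F * yS F)} := by
  apply le_antisymm
  · rintro ⟨a, b⟩ hab
    rw [LinearMap.mem_ker, phi_apply] at hab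
    obtain ⟨A, rfl⟩ := Ideal.Quotient.mk_surjective a
    obtain ⟨B, rfl⟩ := Ideal.Quotient.mk_surjective b
    have hmem : A * X 1 ^ k + B * X 0 ∈
        (Ideal.span {(X (0 : Fin 2)) ^ 2 * X 1} : Ideal (MvPowerSeries (Fin 2) F)) := by
      rw [← Ideal.Quotient.eq_zero_iff_mem, map_add, map_mul, map_mul, map_pow]
      rw [← hab]; ring
    obtain ⟨A', D, hA, hB⟩ := key_div F k A B hmem
    set π := Ideal.Quotient.mk
      (Ideal.span {(X (0 : Fin 2)) ^ 2 * X 1} : Ideal (MvPowerSeries (Fin 2) F))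
    have : (π A, π B) = π A' • ((xS F, -(yS F ^ k)) : Dinf F × Dinf F) +
        π D • (((0 : Dinf F), xS F * yS F) : Dinf F × Dinf F) := by
      rw [hA, hB]
      refine Prod.ext ?_ ?_ <;>
        simp only [Prod.fst_add, Prod.snd_add, Prod.smul_fst, Prod.smul_snd, smul_eq_mul,
          map_mul, map_sub, map_pow, map_add] <;> ring
    rw [this]
    exact Submodule.add_mem _
      (Submodule.smul_mem _ _ (Submodule.subset_span (Set.mem_insert _ _)))
      (Submodule.smul_mem _ _ (Submodule.subset_span (Set.mem_insert_of_mem _ rfl)))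
  · rw [Submodule.span_le]
    rintro v (rfl | rfl)
    · rw [SetLike.mem_coe, LinearMap.mem_ker, phi_apply]; ring
    · rw [SetLike.mem_coe, LinearMap.mem_ker, phi_apply]
      rw [mul_zero, zero_add, xxy_zero]

lemma range_phi (k : ℕ) :
    LinearMap.range (phi F k) = (Ideal.span {yS F ^ k, xS F} : Ideal (Dinf F)) := by
  apply le_antisymm
  · rintro v ⟨⟨a, b⟩, rfl⟩
    rw [phi_apply]
    exact Ideal.add_mem _
      (Ideal.mul_mem_right _ _ (Ideal.subset_span (Set.mem_insert _ _)))
      (Ideal.mul_mem_right _ _ (Ideal.subset_span (Set.mem_insert_of_mem _ rfl)))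
  · rw [Ideal.span_le]
    rintro v (rfl | rfl)
    · exact ⟨(1, 0), by rw [phi_apply]; ring⟩
    · exact ⟨(0, 1), by rw [phi_apply]; ring⟩

/-- The main equivalence. -/
def Yequiv (k : ℕ) : Ymod F k ≃ₗ[Dinf F] (Ideal.span {yS F ^ k, xS F} : Ideal (Dinf F)) :=
  (Submodule.quotEquivOfEq _ _ (ker_phi F k).symm) ≪≫ₗ
    (phi F k).quotKerEquivRange ≪≫ₗ LinearEquiv.ofEq _ _ (range_phi F k)

lemma Yequiv_mk (k : ℕ) (v : Dinf F × Dinf F) :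
    (Yequiv F k (Submodule.Quotient.mk v) : Dinf F) = phi F k v := by
  rfl

theorem stmt17 (k : ℕ) (hk : 1 ≤ k) :
    (∃ e : Ymod F k ≃ₗ[Dinf F] (Ideal.span {yS F ^ k, xS F} : Ideal (Dinf F)),
      e (Submodule.Quotient.mk (1, 0)) =
        ⟨yS F ^ k, Ideal.subset_span (Set.mem_insert _ _)⟩ ∧
      e (Submodule.Quotient.mk (0, 1)) =
        ⟨xS F, Ideal.subset_span (Set.mem_insert_of_mem _ rfl)⟩) ∧
    Nonempty (Ymod F 1 ≃ₗ[Dinf F] (Ideal.span {xS F, yS F} : Ideal (Dinf F))) := by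
  constructor
  · refine ⟨Yequiv F k, ?_, ?_⟩
    · apply Subtype.ext
      rw [Yequiv_mk, phi_apply]; ring
    · apply Subtype.ext
      rw [Yequiv_mk, phi_apply]; ring
  · have hspan : (Ideal.span {yS F ^ 1, xS F} : Ideal (Dinf F)) =
        Ideal.span {xS F, yS F} := by
      rw [pow_one, Ideal.span_pair_comm]
    exact ⟨Yequiv F 1 ≪≫ₗ LinearEquiv.ofEq _ _ hspan⟩
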